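/- arXiv:2210.06148 — 2 statements merged into one kernel-verified Lean document; each statement's English description precedes it below -/
import Mathlib

section
/- Conditional on Z_1,…,Z_{d−1}, when x > g* + ε the conditional probability P'_ε = Pr{|g(Z_d) − x| ≤ ε | Z_1,…,Z_{d−1}} satisfies P'_ε / (2ε) ≤ 1/√(γ_{1d} π |x − g*|) for every ε > 0 (with P'_ε interpreted as 0 when x ≤ g* + ε). -/
open MeasureTheory ProbabilityTheory Filter Set Topology

noncomputable section

/-- The standard normal density `φ`. -/
def stdNormalPDF (z : ℝ) : ℝ := Real.exp (-z ^ 2 / 2) / Real.sqrt (2 * Real.pi)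

/-- `ξ₁ = c₁ + Σ_{j=1}^{d−1} (δ_{1j} Z_j + γ_{1j} Z_j²)` as a function of the values
`zv` of `Z_1, …, Z_{d−1}` (0-indexed: coordinates `0, …, d−2`). -/
def xi1 (c1 : ℝ) (δ1 γ1 : ℕ → ℝ) (d : ℕ) (zv : ℕ → ℝ) : ℝ :=
  c1 + ∑ j ∈ Finset.range (d - 1), (δ1 j * zv j + γ1 j * zv j ^ 2)

/-- The quadratic `g(t) = ξ₁ + δ_{1d} t + γ_{1d} t²`. -/
def gfun (c1 : ℝ) (δ1 γ1 : ℕ → ℝ) (d : ℕ) (zv : ℕ → ℝ) (t : ℝ) : ℝ :=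
  xi1 c1 δ1 γ1 d zv + δ1 (d - 1) * t + γ1 (d - 1) * t ^ 2

/-- `g* = min_t g(t) = ξ₁ − δ_{1d}²/(4γ_{1d})`. -/
def gstar (c1 : ℝ) (δ1 γ1 : ℕ → ℝ) (d : ℕ) (zv : ℕ → ℝ) : ℝ :=
  xi1 c1 δ1 γ1 d zv - δ1 (d - 1) ^ 2 / (4 * γ1 (d - 1))

/-- `λ = √(δ_{1d}² + 4γ_{1d}(x − ξ₁)) = |g'(r₁)| = |g'(r₂)|`. -/
def lamb (c1 : ℝ) (δ1 γ1 : ℕ → ℝ) (d : ℕ) (x : ℝ) (zv : ℕ → ℝ) : ℝ :=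
  Real.sqrt (δ1 (d - 1) ^ 2 + 4 * γ1 (d - 1) * (x - xi1 c1 δ1 γ1 d zv))

/-- The smaller root `r₁` of `g(t) = x` (when `x > g*`). -/
def root1 (c1 : ℝ) (δ1 γ1 : ℕ → ℝ) (d : ℕ) (x : ℝ) (zv : ℕ → ℝ) : ℝ :=
  (-δ1 (d - 1) - lamb c1 δ1 γ1 d x zv) / (2 * γ1 (d - 1))

/-- The larger root `r₂` of `g(t) = x` (when `x > g*`). -/
def root2 (c1 : ℝ) (δ1 γ1 : ℕ → ℝ) (d : ℕ) (x : ℝ) (zv : ℕ → ℝ) : ℝ :=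
  (-δ1 (d - 1) + lamb c1 δ1 γ1 d x zv) / (2 * γ1 (d - 1))

/-- `q₁ = φ(r₁)/λ` when `x > g*`, and `q₁ = 0` when `x ≤ g*`. -/
def qwt1 (c1 : ℝ) (δ1 γ1 : ℕ → ℝ) (d : ℕ) (x : ℝ) (zv : ℕ → ℝ) : ℝ :=
  if gstar c1 δ1 γ1 d zv < x then stdNormalPDF (root1 c1 δ1 γ1 d x zv) / lamb c1 δ1 γ1 d x zv
  else 0

/-- `q₂ = φ(r₂)/λ` when `x > g*`, and `q₂ = 0` when `x ≤ g*`. -/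
def qwt2 (c1 : ℝ) (δ1 γ1 : ℕ → ℝ) (d : ℕ) (x : ℝ) (zv : ℕ → ℝ) : ℝ :=
  if gstar c1 δ1 γ1 d zv < x then stdNormalPDF (root2 c1 δ1 γ1 d x zv) / lamb c1 δ1 γ1 d x zv
  else 0

open scoped NNReal ENNReal in
lemma gaussPDF_le (t : ℝ) :
    gaussianPDF 0 1 t ≤ ENNReal.ofReal (Real.sqrt (2 * Real.pi))⁻¹ := by
  unfold gaussianPDF
  apply ENNReal.ofReal_le_ofReal
  unfold gaussianPDFReal
  have h1 : Real.exp (-(t - 0) ^ 2 / (2 * (1:ℝ≥0))) ≤ 1 := by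
    rw [Real.exp_le_one_iff]
    push_cast
    nlinarith [sq_nonneg t]
  calc (Real.sqrt (2 * Real.pi * (1:ℝ≥0)))⁻¹ * Real.exp (-(t - 0) ^ 2 / (2 * (1:ℝ≥0)))
      ≤ (Real.sqrt (2 * Real.pi * (1:ℝ≥0)))⁻¹ * 1 := by
        apply mul_le_mul_of_nonneg_left h1; positivity
    _ = (Real.sqrt (2 * Real.pi))⁻¹ := by push_cast; ring_nf

lemma gauss_set_le (S : Set ℝ) :
    gaussianReal 0 1 S ≤ ENNReal.ofReal (Real.sqrt (2 * Real.pi))⁻¹ * volume S := by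
  rw [gaussianReal_apply 0 one_ne_zero S]
  calc ∫⁻ t in S, gaussianPDF 0 1 t
      ≤ ∫⁻ _ in S, ENNReal.ofReal (Real.sqrt (2 * Real.pi))⁻¹ :=
        lintegral_mono fun t => gaussPDF_le t
    _ = ENNReal.ofReal (Real.sqrt (2 * Real.pi))⁻¹ * volume S := by
        rw [setLIntegral_const, mul_comm]

lemma sqrt_diff_le (γ a ε : ℝ) (hγ : 0 < γ) (hε : 0 < ε) (ha : ε < a) :
    Real.sqrt ((a + ε) / γ) - Real.sqrt ((a - ε) / γ) ≤ 2 * ε / Real.sqrt (2 * γ * a) := by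
  set sA := Real.sqrt ((a - ε) / γ) with hsA
  set sB := Real.sqrt ((a + ε) / γ) with hsB
  have hA : (0:ℝ) ≤ (a - ε) / γ := div_nonneg (by linarith) hγ.le
  have hB : (0:ℝ) ≤ (a + ε) / γ := div_nonneg (by linarith) hγ.le
  have hsA0 : 0 ≤ sA := Real.sqrt_nonneg _
  have hsB0 : 0 < sB := Real.sqrt_pos.2 (div_pos (by linarith) hγ)
  have e1 : sA ^ 2 = (a - ε) / γ := Real.sq_sqrt hA
  have e2 : sB ^ 2 = (a + ε) / γ := Real.sq_sqrt hB
  have hBA : sA ≤ sB := Real.sqrt_le_sqrt (by gcongr; linarith)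
  have hsq' : (sB ^ 2 - sA ^ 2) * γ = 2 * ε := by
    rw [e1, e2]; field_simp; ring
  have hAB2 : sA ^ 2 + sB ^ 2 = 2 * a / γ := by rw [e1, e2]; field_simp; ring
  have hsum : Real.sqrt (2 * a / γ) ≤ sA + sB := by
    have h1 : 2 * a / γ ≤ (sA + sB) ^ 2 := by nlinarith [mul_nonneg hsA0 hsB0.le]
    calc Real.sqrt (2 * a / γ) ≤ Real.sqrt ((sA + sB) ^ 2) := Real.sqrt_le_sqrt h1
      _ = sA + sB := Real.sqrt_sq (by positivity)
  have hden : Real.sqrt (2 * γ * a) = γ * Real.sqrt (2 * a / γ) := by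
    rw [← Real.sqrt_sq hγ.le, ← Real.sqrt_mul (by positivity)]
    congr 1; field_simp; rw [Real.sq_sqrt (sq_nonneg γ)]
  have hdenpos : (0:ℝ) < Real.sqrt (2 * γ * a) :=
    Real.sqrt_pos.2 (by nlinarith)
  rw [le_div_iff₀ hdenpos, hden]
  nlinarith [mul_le_mul_of_nonneg_left hsum (sub_nonneg.2 hBA), hsq', hγ]


/-- Conditional on `Z_1, …, Z_{d−1}` (i.e. for any values `zv` of
these variables), when `x > g* + ε` the conditional probability
`P'_ε = Pr{|g(Z_d) − x| ≤ ε | Z_1, …, Z_{d−1}}` (interpreted as `0` when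
`x ≤ g* + ε`) satisfies `P'_ε / (2ε) ≤ 1/√(γ_{1d} π |x − g*|)` for every `ε > 0`. -/
theorem Pprime_bound
    (d : ℕ) (hd : 1 ≤ d)
    (c1 : ℝ) (δ1 γ1 : ℕ → ℝ) (hγ : 0 < γ1 (d - 1))
    (x : ℝ) :
    ∀ zv : ℕ → ℝ, ∀ ε > (0:ℝ),
      (if gstar c1 δ1 γ1 d zv + ε < x then
          (gaussianReal 0 1 {t | |gfun c1 δ1 γ1 d zv t - x| ≤ ε}).toReal
        else 0) / (2 * ε)
      ≤ 1 / Real.sqrt (γ1 (d - 1) * Real.pi * |x - gstar c1 δ1 γ1 d zv|) := by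
  intro zv ε hε
  have hγ0 : γ1 (d - 1) ≠ 0 := hγ.ne'
  split_ifs with h
  · -- main case : gstar + ε < x
    set γ := γ1 (d - 1) with hγdef
    set gs := gstar c1 δ1 γ1 d zv with hgsdef
    set c := δ1 (d - 1) / (2 * γ) with hcdef
    set a := x - gs with hadef
    have ha : ε < a := by rw [hadef]; linarith
    have ha0 : (0:ℝ) < a := hε.trans ha
    set sA := Real.sqrt ((a - ε) / γ) with hsAdef
    set sB := Real.sqrt ((a + ε) / γ) with hsBdef
    set S := {t : ℝ | |gfun c1 δ1 γ1 d zv t - x| ≤ ε} with hSdef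
    have hquad : ∀ t : ℝ, gfun c1 δ1 γ1 d zv t - gs = γ * (t + c) ^ 2 := by
      intro t
      rw [hgsdef, hcdef]
      unfold gfun gstar
      rw [← hγdef]
      field_simp
      ring
    have hL0 : 0 ≤ sB - sA := by
      rw [hsAdef, hsBdef]
      have : sA ≤ sB := Real.sqrt_le_sqrt (by gcongr; linarith)
      linarith
    have hsub : S ⊆ Set.Icc (-c - sB) (-c - sA) ∪ Set.Icc (-c + sA) (-c + sB) := by
      intro t ht
      simp only [hSdef, Set.mem_setOf_eq, abs_le] at ht
      have hq := hquad t
      have h1 : a - ε ≤ γ * (t + c) ^ 2 := by rw [hadef]; linarith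
      have h2 : γ * (t + c) ^ 2 ≤ a + ε := by rw [hadef]; linarith
      have hle1 : sA ≤ |t + c| := by
        rw [← Real.sqrt_sq_eq_abs, hsAdef]
        exact Real.sqrt_le_sqrt ((div_le_iff₀ hγ).2 (by linarith))
      have hle2 : |t + c| ≤ sB := by
        rw [← Real.sqrt_sq_eq_abs, hsBdef]
        exact Real.sqrt_le_sqrt ((le_div_iff₀ hγ).2 (by linarith))
      rcases le_or_gt 0 (t + c) with h0 | h0
      · right
        rw [abs_of_nonneg h0] at hle1 hle2
        exact Set.mem_Icc.2 ⟨by linarith, by linarith⟩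
      · left
        rw [abs_of_neg h0] at hle1 hle2
        exact Set.mem_Icc.2 ⟨by linarith, by linarith⟩
    have hvol : volume S ≤ ENNReal.ofReal (2 * (sB - sA)) := by
      calc volume S ≤ volume (Set.Icc (-c - sB) (-c - sA) ∪ Set.Icc (-c + sA) (-c + sB)) :=
            measure_mono hsub
        _ ≤ volume (Set.Icc (-c - sB) (-c - sA)) + volume (Set.Icc (-c + sA) (-c + sB)) :=
            measure_union_le _ _
        _ = ENNReal.ofReal (sB - sA) + ENNReal.ofReal (sB - sA) := by
            rw [Real.volume_Icc, Real.volume_Icc,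
              show -c - sA - (-c - sB) = sB - sA by ring,
              show -c + sB - (-c + sA) = sB - sA by ring]
        _ = ENNReal.ofReal (2 * (sB - sA)) := by
            rw [← ENNReal.ofReal_add hL0 hL0]; congr 1; ring
    have hP : (gaussianReal 0 1 S).toReal ≤ (Real.sqrt (2 * Real.pi))⁻¹ * (2 * (sB - sA)) := by
      apply ENNReal.toReal_le_of_le_ofReal (by positivity)
      calc gaussianReal 0 1 S
          ≤ ENNReal.ofReal (Real.sqrt (2 * Real.pi))⁻¹ * volume S := gauss_set_le S
        _ ≤ ENNReal.ofReal (Real.sqrt (2 * Real.pi))⁻¹ * ENNReal.ofReal (2 * (sB - sA)) := by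
            gcongr
        _ = ENNReal.ofReal ((Real.sqrt (2 * Real.pi))⁻¹ * (2 * (sB - sA))) :=
            (ENNReal.ofReal_mul (by positivity)).symm
    have hkey := sqrt_diff_le γ a ε hγ hε ha
    have habs : |x - gs| = a := by rw [← hadef]; exact abs_of_pos ha0
    rw [habs]
    have hπ := Real.pi_pos
    have hrt : (0:ℝ) < Real.sqrt (γ * Real.pi * a) := Real.sqrt_pos.2 (by positivity)
    have hsp : (0:ℝ) < Real.sqrt (2 * Real.pi) := Real.sqrt_pos.2 (by positivity)
    have hsg : (0:ℝ) < Real.sqrt (2 * γ * a) := Real.sqrt_pos.2 (by positivity)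
    have h2sq : Real.sqrt (2 * Real.pi) * Real.sqrt (2 * γ * a) = 2 * Real.sqrt (γ * Real.pi * a) := by
      rw [← Real.sqrt_mul (by positivity),
        show 2 * Real.pi * (2 * γ * a) = 2 ^ 2 * (γ * Real.pi * a) by ring,
        Real.sqrt_mul (by positivity), Real.sqrt_sq (by norm_num : (0:ℝ) ≤ 2)]
    rw [inv_mul_eq_div, le_div_iff₀ hsp] at hP
    have h3 : (sB - sA) * Real.sqrt (2 * γ * a) ≤ 2 * ε := (le_div_iff₀ hsg).1 hkey
    rw [div_le_div_iff₀ (by positivity) hrt]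
    have hPn : (0:ℝ) ≤ (gaussianReal 0 1 S).toReal := ENNReal.toReal_nonneg
    nlinarith [mul_le_mul_of_nonneg_right hP hsg.le,
      mul_le_mul_of_nonneg_left h3 (by norm_num : (0:ℝ) ≤ 2),
      mul_nonneg hPn hrt.le]
  · rw [zero_div]
    positivity
end
end

section
/- Let X be normal with mean μ_x and variance σ_x² > 0, let Z be standard normal independent of X, let ξ = σ_y ( ρ (X − μ_x)/σ_x + √(1 − ρ²) Z ) with σ_y > 0 and |ρ| < 1, and let Y = δ X + (1/2) γ X² + ξ. Then for all α, β ∈ (0,1), VaR_α(X) = μ_x + Φ^{−1}(α) σ_x and CoVaR_{α,β} = δ VaR_α(X) + (1/2) γ VaR_α(X)² + σ_y [ ρ Φ^{−1}(α) + √(1 − ρ²) Φ^{−1}(β) ], where Φ^{−1} is the inverse of the standard normal cumulative distribution function. -/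
open MeasureTheory ProbabilityTheory Filter Set Topology

noncomputable section

/-- The standard normal cumulative distribution function `Φ`. -/
def stdNormalCDF (t : ℝ) : ℝ := (gaussianReal 0 1 (Iic t)).toReal

namespace CoVaRAux

lemma stdGaussian_Iic (t : ℝ) :
    gaussianReal 0 1 (Iic t) = ENNReal.ofReal (stdNormalCDF t) :=
  (ENNReal.ofReal_toReal (measure_ne_top _ _)).symm

lemma gauss_pos (μ : ℝ) {v : NNReal} (hv : v ≠ 0) {s : Set ℝ}
    (h0 : volume s ≠ 0) : 0 < gaussianReal μ v s := by
  rw [gaussianReal_apply _ hv, lintegral_pos_iff_support (measurable_gaussianPDF _ _)]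
  have hsupp : Function.support (gaussianPDF μ v) = univ :=
    eq_univ_of_forall fun x => (gaussianPDF_pos _ hv x).ne'
  rw [hsupp, Measure.restrict_apply_univ]
  exact h0.bot_lt

lemma stdNormalCDF_nonneg (t : ℝ) : 0 ≤ stdNormalCDF t := ENNReal.toReal_nonneg

lemma stdNormalCDF_strictMono : StrictMono stdNormalCDF := by
  intro t u htu
  have hdisj : Disjoint (Iic t) (Ioc t u) := by
    simp only [Set.disjoint_left, mem_Iic, mem_Ioc, not_and]
    intro x hx hx'
    linarith
  have h1 : gaussianReal 0 1 (Iic u)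
      = gaussianReal 0 1 (Iic t) + gaussianReal 0 1 (Ioc t u) := by
    rw [← measure_union hdisj measurableSet_Ioc, Iic_union_Ioc_eq_Iic htu.le]
  have hpos : 0 < gaussianReal 0 1 (Ioc t u) := by
    apply gauss_pos _ one_ne_zero
    simp [Real.volume_Ioc, sub_pos, htu]
  have heq : stdNormalCDF u = stdNormalCDF t + (gaussianReal 0 1 (Ioc t u)).toReal := by
    rw [stdNormalCDF, h1, ENNReal.toReal_add (measure_ne_top _ _) (measure_ne_top _ _)]
    rfl
  rw [heq]
  have := ENNReal.toReal_pos hpos.ne' (measure_ne_top _ _)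
  linarith

lemma stdNormalCDF_mono : Monotone stdNormalCDF := stdNormalCDF_strictMono.monotone

lemma gaussPDF_le (x : ℝ) :
    gaussianPDF 0 1 x ≤ ENNReal.ofReal ((Real.sqrt (2 * Real.pi))⁻¹) := by
  rw [gaussianPDF]
  apply ENNReal.ofReal_le_ofReal
  rw [gaussianPDFReal]
  have h1 : Real.exp (-(x - 0) ^ 2 / (2 * ((1:NNReal):ℝ))) ≤ 1 := by
    rw [Real.exp_le_one_iff]
    have : (0:ℝ) ≤ (x - 0)^2 := sq_nonneg _
    simp only [NNReal.coe_one]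
    nlinarith
  calc (Real.sqrt (2 * Real.pi * ((1:NNReal):ℝ)))⁻¹
        * Real.exp (-(x - 0) ^ 2 / (2 * ((1:NNReal):ℝ)))
      ≤ (Real.sqrt (2 * Real.pi * ((1:NNReal):ℝ)))⁻¹ * 1 := by
        apply mul_le_mul_of_nonneg_left h1
        positivity
    _ = (Real.sqrt (2 * Real.pi))⁻¹ := by norm_num

lemma stdNormalCDF_continuous : Continuous stdNormalCDF := by
  set C : ℝ := (Real.sqrt (2 * Real.pi))⁻¹ with hC
  have hC0 : 0 ≤ C := by positivity
  have key : ∀ t u : ℝ, t ≤ u → stdNormalCDF u - stdNormalCDF t ≤ C * (u - t) := by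
    intro t u htu
    have h1 : gaussianReal 0 1 (Iic u)
        = gaussianReal 0 1 (Iic t) + gaussianReal 0 1 (Ioc t u) := by
      rw [← measure_union (by
          simp only [Set.disjoint_left, mem_Iic, mem_Ioc, not_and]
          intro x hx hx'
          linarith)
        measurableSet_Ioc, Iic_union_Ioc_eq_Iic htu]
    have h2 : gaussianReal 0 1 (Ioc t u) ≤ ENNReal.ofReal (C * (u - t)) := by
      rw [gaussianReal_apply _ one_ne_zero]
      calc ∫⁻ x in Ioc t u, gaussianPDF 0 1 x
          ≤ ∫⁻ _ in Ioc t u, ENNReal.ofReal C := by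
            exact setLIntegral_mono (by fun_prop) (fun x _ => gaussPDF_le x)
        _ = ENNReal.ofReal C * volume (Ioc t u) := setLIntegral_const _ _
        _ = ENNReal.ofReal (C * (u - t)) := by
            rw [Real.volume_Ioc, ← ENNReal.ofReal_mul hC0]
    have h3 : stdNormalCDF u = stdNormalCDF t + (gaussianReal 0 1 (Ioc t u)).toReal := by
      rw [stdNormalCDF, h1, ENNReal.toReal_add (measure_ne_top _ _) (measure_ne_top _ _)]
      rfl
    have h4 : (gaussianReal 0 1 (Ioc t u)).toReal ≤ C * (u - t) := by
      refine ENNReal.toReal_le_of_le_ofReal (by nlinarith) h2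
    linarith
  have hlip : LipschitzWith C.toNNReal stdNormalCDF := by
    apply LipschitzWith.of_dist_le_mul
    intro t u
    rw [Real.dist_eq, Real.dist_eq, Real.coe_toNNReal _ hC0]
    rcases le_total t u with h | h
    · rw [abs_sub_comm (stdNormalCDF t), abs_of_nonneg (sub_nonneg.mpr (stdNormalCDF_mono h)),
        abs_sub_comm t, abs_of_nonneg (sub_nonneg.mpr h)]
      exact key t u h
    · rw [abs_of_nonneg (sub_nonneg.mpr (stdNormalCDF_mono h)),
        abs_of_nonneg (sub_nonneg.mpr h)]
      exact key u t h
  exact hlip.continuous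

lemma gauss_map_affine (μx σx : ℝ) (hσx : 0 < σx) :
    Measure.map (fun x => σx * x + μx) (gaussianReal 0 1)
      = gaussianReal μx (σx^2).toNNReal := by
  have hvar : (⟨σx^2, sq_nonneg _⟩ : NNReal) * 1 = (σx^2).toNNReal := by
    ext
    simp [Real.coe_toNNReal _ (sq_nonneg σx)]
  have h1 : Measure.map (fun x => σx * x) (gaussianReal 0 1)
      = gaussianReal 0 (σx^2).toNNReal := by
    have := gaussianReal_map_const_mul (μ := 0) (v := 1) σx
    convert this using 2
    · simp
    · ext
      simp [Real.coe_toNNReal _ (sq_nonneg σx)]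
  have h2 : (fun x : ℝ => σx * x + μx) = (· + μx) ∘ (fun x => σx * x) := rfl
  rw [h2, ← Measure.map_map (measurable_add_const μx) (measurable_const_mul σx), h1,
    gaussianReal_map_add_const]
  norm_num

lemma gauss_Iic (μx σx t : ℝ) (hσx : 0 < σx) :
    gaussianReal μx (σx^2).toNNReal (Iic t)
      = ENNReal.ofReal (stdNormalCDF ((t - μx)/σx)) := by
  rw [← gauss_map_affine μx σx hσx,
    Measure.map_apply (by fun_prop) measurableSet_Iic]
  have hpre : (fun x => σx * x + μx) ⁻¹' Iic t = Iic ((t - μx)/σx) := by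
    ext x
    simp only [mem_preimage, mem_Iic]
    rw [le_div_iff₀ hσx]
    constructor <;> intro <;> nlinarith
  rw [hpre, stdGaussian_Iic]

lemma tendsto_ratio (ν : Measure ℝ) [IsFiniteMeasure ν] (v : ℝ)
    (hν : ∀ ε : ℝ, 0 < ε → ν (Icc (v - ε) (v + ε)) ≠ 0)
    (h : ℝ → ℝ) (hh : Continuous h) (h0 : ∀ x, 0 ≤ h x) :
    Tendsto (fun ε : ℝ => (∫⁻ x in Icc (v - ε) (v + ε), ENNReal.ofReal (h x) ∂ν).toReal
      / (ν (Icc (v - ε) (v + ε))).toReal) (𝓝[>] 0) (𝓝 (h v)) := by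
  rw [Metric.tendsto_nhds]
  intro η hη
  obtain ⟨ε0, hε0, hcont⟩ := Metric.continuousAt_iff.mp hh.continuousAt (η/2) (by linarith)
  filter_upwards [Ioo_mem_nhdsGT_of_mem (Set.left_mem_Ico.mpr hε0)] with ε hε
  obtain ⟨hε1, hε2⟩ := hε
  set I := Icc (v - ε) (v + ε) with hI
  have hmIpos : 0 < (ν I).toReal :=
    ENNReal.toReal_pos (hν ε hε1) (measure_ne_top _ _)
  have hbound : ∀ x ∈ I, ‖h x - h v‖ ≤ η/2 := by
    intro x hx
    have hd : dist x v < ε0 := by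
      rw [Real.dist_eq]
      have h1 : |x - v| ≤ ε := abs_le.mpr ⟨by linarith [hx.1], by linarith [hx.2]⟩
      linarith
    have := hcont hd
    rw [Real.dist_eq] at this
    exact le_of_lt this
  have hint : IntegrableOn h I ν := hh.integrableOn_Icc
  have hnum : (∫⁻ x in I, ENNReal.ofReal (h x) ∂ν).toReal = ∫ x in I, h x ∂ν := by
    rw [integral_eq_lintegral_of_nonneg_ae (ae_of_all _ h0) hh.aestronglyMeasurable]
  rw [hnum, Real.dist_eq]
  have key : |∫ x in I, h x ∂ν - h v * (ν I).toReal| ≤ η/2 * (ν I).toReal := by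
    have heq : ∫ x in I, h x ∂ν - h v * (ν I).toReal = ∫ x in I, (h x - h v) ∂ν := by
      rw [integral_sub hint (integrableOn_const (measure_ne_top _ _)),
        integral_const]
      simp [smul_eq_mul, mul_comm, Measure.real]
    rw [heq]
    exact norm_setIntegral_le_of_norm_le_const (measure_lt_top _ _) hbound
  have hrw : (∫ x in I, h x ∂ν) / (ν I).toReal - h v
      = ((∫ x in I, h x ∂ν) - h v * (ν I).toReal) / (ν I).toReal := by
    field_simp
  rw [hrw, abs_div, abs_of_pos hmIpos, div_lt_iff₀ hmIpos]
  calc |∫ x in I, h x ∂ν - h v * (ν I).toReal| ≤ η/2 * (ν I).toReal := key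
    _ < η * (ν I).toReal := by nlinarith

end CoVaRAux

/-- Let `X` be normal with mean `μx` and variance `σx² > 0`, `Z`
standard normal independent of `X`, `ξ = σy (ρ (X − μx)/σx + √(1−ρ²) Z)` with
`σy > 0`, `|ρ| < 1`, and `Y = δ X + (1/2) γ X² + ξ`. Then for all `α, β ∈ (0,1)`:
`VaR_α(X) = μx + Φ⁻¹(α) σx` and
`CoVaR_{α,β} = δ VaR_α(X) + (1/2) γ VaR_α(X)² + σy (ρ Φ⁻¹(α) + √(1−ρ²) Φ⁻¹(β))`.
Here `vα = VaR_α(X)` satisfies `Pr{X ≤ vα} = α`, and `c = CoVaR_{α,β}` is the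
`β`-quantile of the conditional distribution of `Y` given `X = vα`, defined through
`Pr{Y ≤ c | X = vα} = lim_{ε→0} Pr{Y ≤ c, |X − vα| ≤ ε}/Pr{|X − vα| ≤ ε} = β`, and
`Φ⁻¹(α) = a`, `Φ⁻¹(β) = b` are characterized by `Φ(a) = α`, `Φ(b) = β`. -/
theorem covar_nonlinear_portfolio
    {Ω : Type*} [MeasurableSpace Ω] (P : Measure Ω) [IsProbabilityMeasure P]
    (X Z : Ω → ℝ) (hX : Measurable X) (hZ : Measurable Z)
    (μx σx σy ρ δ γ : ℝ) (hσx : 0 < σx) (hσy : 0 < σy) (hρ : |ρ| < 1)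
    (hXlaw : Measure.map X P = gaussianReal μx (σx ^ 2).toNNReal)
    (hZlaw : Measure.map Z P = gaussianReal 0 1)
    (hindep : IndepFun X Z P)
    (Y : Ω → ℝ)
    (hY : ∀ ω, Y ω = δ * X ω + 1 / 2 * γ * X ω ^ 2
      + σy * (ρ * (X ω - μx) / σx + Real.sqrt (1 - ρ ^ 2) * Z ω))
    (α β : ℝ) (hα : α ∈ Ioo (0:ℝ) 1) (hβ : β ∈ Ioo (0:ℝ) 1)
    (a b : ℝ) (ha : stdNormalCDF a = α) (hb : stdNormalCDF b = β)
    -- `vα = VaR_α(X)`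
    (vα : ℝ) (hvα : P {ω | X ω ≤ vα} = ENNReal.ofReal α)
    -- `c = CoVaR_{α,β}`: the `β`-quantile of the conditional distribution of `Y`
    -- given `X = vα`
    (c : ℝ)
    (hc : Tendsto
      (fun ε : ℝ => (P {ω | Y ω ≤ c ∧ |X ω - vα| ≤ ε}).toReal
        / (P {ω | |X ω - vα| ≤ ε}).toReal)
      (𝓝[>] 0) (𝓝 β)) :
    vα = μx + a * σx
    ∧ c = δ * vα + 1 / 2 * γ * vα ^ 2
        + σy * (ρ * a + Real.sqrt (1 - ρ ^ 2) * b) := by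
  classical
  have hvne : (σx ^ 2).toNNReal ≠ 0 := by
    refine (Real.toNNReal_pos.mpr (by positivity)).ne'
  -- Part 1
  have h1 : gaussianReal μx (σx ^ 2).toNNReal (Iic vα) = ENNReal.ofReal α := by
    rw [← hXlaw, Measure.map_apply hX measurableSet_Iic]
    exact hvα
  rw [CoVaRAux.gauss_Iic μx σx vα hσx] at h1
  have h2 : stdNormalCDF ((vα - μx)/σx) = α :=
    (ENNReal.ofReal_eq_ofReal_iff (CoVaRAux.stdNormalCDF_nonneg _) hα.1.le).mp h1
  have hv1 : (vα - μx)/σx = a :=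
    CoVaRAux.stdNormalCDF_strictMono.injective (h2.trans ha.symm)
  have part1 : vα = μx + a * σx := by
    field_simp at hv1
    linarith
  refine ⟨part1, ?_⟩
  -- Part 2
  have hρ2 : ρ ^ 2 < 1 := by
    have := abs_lt.mp hρ
    nlinarith
  set s : ℝ := σy * Real.sqrt (1 - ρ ^ 2) with hs_def
  have hs : 0 < s := mul_pos hσy (Real.sqrt_pos.mpr (by linarith))
  set g : ℝ → ℝ := fun x => δ * x + 1 / 2 * γ * x ^ 2 + σy * (ρ * (x - μx) / σx)
    with hg_def
  have hYg : ∀ ω, Y ω = g (X ω) + s * Z ω := by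
    intro ω
    rw [hY]
    simp only [hg_def, hs_def]
    ring
  have hgcont : Continuous g := by
    apply Continuous.add
    apply Continuous.add
    · fun_prop
    · fun_prop
    · exact continuous_const.mul ((continuous_const.mul
        (continuous_id.sub continuous_const)).div_const σx)
  set h : ℝ → ℝ := fun x => stdNormalCDF ((c - g x) / s) with hh_def
  have hhcont : Continuous h :=
    CoVaRAux.stdNormalCDF_continuous.comp ((continuous_const.sub hgcont).div_const s)
  set μX : Measure ℝ := gaussianReal μx (σx ^ 2).toNNReal with hμX
  -- joint identity
  have key : ∀ ε : ℝ, P {ω | Y ω ≤ c ∧ |X ω - vα| ≤ ε}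
      = ∫⁻ x in Icc (vα - ε) (vα + ε), ENNReal.ofReal (h x) ∂μX := by
    intro ε
    have hjoint : Measure.map (fun ω => (X ω, Z ω)) P
        = (Measure.map X P).prod (Measure.map Z P) :=
      (indepFun_iff_map_prod_eq_prod_map_map hX.aemeasurable hZ.aemeasurable).mp hindep
    set S : Set (ℝ × ℝ) :=
      {p | p.2 ≤ (c - g p.1) / s} ∩ {p | p.1 ∈ Icc (vα - ε) (vα + ε)} with hS
    have hSm : MeasurableSet S := by
      refine MeasurableSet.inter ?_ (measurable_fst measurableSet_Icc)
      exact measurableSet_le measurable_snd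
        ((((continuous_const.sub hgcont).div_const s).measurable).comp measurable_fst)
    have hpre : {ω | Y ω ≤ c ∧ |X ω - vα| ≤ ε} = (fun ω => (X ω, Z ω)) ⁻¹' S := by
      ext ω
      simp only [hS, mem_setOf_eq, mem_preimage, mem_inter_iff, mem_Icc, hYg ω]
      constructor
      · rintro ⟨h1', h2'⟩
        obtain ⟨ha1, ha2⟩ := abs_le.mp h2'
        exact ⟨(le_div_iff₀ hs).mpr (by linarith), by constructor <;> linarith⟩
      · rintro ⟨h1', h2'⟩
        have := (le_div_iff₀ hs).mp h1'
        exact ⟨by linarith, abs_le.mpr ⟨by linarith [h2'.1], by linarith [h2'.2]⟩⟩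
    rw [hpre, ← Measure.map_apply (hX.prodMk hZ) hSm, hjoint, hXlaw, hZlaw,
      Measure.prod_apply hSm]
    have hsec : ∀ x : ℝ, gaussianReal 0 1 (Prod.mk x ⁻¹' S)
        = (Icc (vα - ε) (vα + ε)).indicator (fun x => ENNReal.ofReal (h x)) x := by
      intro x
      by_cases hx : x ∈ Icc (vα - ε) (vα + ε)
      · have hps : Prod.mk x ⁻¹' S = Iic ((c - g x) / s) := by
          ext z
          simp only [hS, mem_preimage, mem_inter_iff, mem_setOf_eq, mem_Iic]
          exact and_iff_left hx
        rw [hps, CoVaRAux.stdGaussian_Iic, indicator_of_mem hx]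
      · have hps : Prod.mk x ⁻¹' S = ∅ := by
          ext z
          simp only [hS, mem_preimage, mem_inter_iff, mem_setOf_eq, mem_empty_iff_false,
            iff_false, not_and]
          exact fun _ => hx
        rw [hps, indicator_of_notMem hx]
        simp
    simp_rw [hsec]
    rw [lintegral_indicator measurableSet_Icc]
  have key2 : ∀ ε : ℝ, P {ω | |X ω - vα| ≤ ε} = μX (Icc (vα - ε) (vα + ε)) := by
    intro ε
    have hset : {ω | |X ω - vα| ≤ ε} = X ⁻¹' Icc (vα - ε) (vα + ε) := by
      ext ω
      simp only [mem_setOf_eq, mem_preimage, mem_Icc, abs_le]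
      constructor <;> intro hh' <;> constructor <;> linarith [hh'.1, hh'.2]
    rw [hset, ← Measure.map_apply hX measurableSet_Icc, hXlaw]
  have hIccpos : ∀ ε : ℝ, 0 < ε → μX (Icc (vα - ε) (vα + ε)) ≠ 0 := by
    intro ε hε
    refine (CoVaRAux.gauss_pos μx hvne ?_).ne'
    rw [Real.volume_Icc]
    simp only [ne_eq, ENNReal.ofReal_eq_zero, not_le]
    linarith
  have hlim : Tendsto
      (fun ε : ℝ => (∫⁻ x in Icc (vα - ε) (vα + ε), ENNReal.ofReal (h x) ∂μX).toReal
        / (μX (Icc (vα - ε) (vα + ε))).toReal) (𝓝[>] 0) (𝓝 (h vα)) :=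
    CoVaRAux.tendsto_ratio μX vα hIccpos h hhcont
      (fun x => CoVaRAux.stdNormalCDF_nonneg _)
  have hfun : (fun ε : ℝ => (P {ω | Y ω ≤ c ∧ |X ω - vα| ≤ ε}).toReal
        / (P {ω | |X ω - vα| ≤ ε}).toReal)
      = fun ε : ℝ => (∫⁻ x in Icc (vα - ε) (vα + ε), ENNReal.ofReal (h x) ∂μX).toReal
        / (μX (Icc (vα - ε) (vα + ε))).toReal := by
    funext ε
    rw [key ε, key2 ε]
  rw [hfun] at hc
  have hβ' : β = h vα := tendsto_nhds_unique hc hlim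
  have hb' : stdNormalCDF ((c - g vα) / s) = stdNormalCDF b := by
    show h vα = stdNormalCDF b
    rw [hb]
    exact hβ'.symm
  have hcb : (c - g vα) / s = b := CoVaRAux.stdNormalCDF_strictMono.injective hb'
  have hc2 : c = g vα + s * b := by
    have := (div_eq_iff hs.ne').mp hcb
    linarith
  rw [hc2, hg_def, hs_def]
  have hva : ρ * (vα - μx) / σx = ρ * a := by
    rw [mul_div_assoc, hv1]
  simp only []
  rw [hva]
  ring
end
end
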